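/- Let A be an m×n real matrix, b ∈ ℝᵐ, λ > 0, p ≥ 1, σ > 0, and define H_{p,σ}(x) = ‖Ax − b‖₂² + λ·∑_{k=1}^n φ_σ(x_k)^p for x ∈ ℝⁿ. Then H_{p,σ} is twice differentiable on ℝⁿ with Hessian ∇²H_{p,σ}(x) = 2AᵀA + λ·p·Diag(w(x)), where w(x) ∈ ℝⁿ has components w_j(x) = (p−1)·φ_σ(x_j)^{p−2}·erf(x_j/(√2·σ))² + φ_σ(x_j)^{p−1}·√(2/(πσ²))·exp(−x_j²/(2σ²)); in particular the mixed second partial derivatives ∂²/∂x_i∂x_j of the penalty term vanish for i ≠ j. -/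

import Mathlib

open Real Matrix

/-- The error function `erf(t) = (2/√π)·∫₀ᵗ exp(−u²) du`. -/
noncomputable def erf (t : ℝ) : ℝ := (2 / Real.sqrt π) * ∫ u in (0 : ℝ)..t, Real.exp (-u ^ 2)

/-- The smoothed absolute value `φ_σ(t) = t·erf(t/(√2·σ)) + √(2/π)·σ·exp(−t²/(2σ²))`. -/
noncomputable def phi (σ t : ℝ) : ℝ :=
  t * erf (t / (Real.sqrt 2 * σ)) + Real.sqrt (2 / π) * σ * Real.exp (-t ^ 2 / (2 * σ ^ 2))

lemma cont_exp_neg_sq : Continuous fun u : ℝ => Real.exp (-u ^ 2) := by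
  continuity

lemma hasDerivAt_erf (t : ℝ) :
    HasDerivAt erf (2 / Real.sqrt π * Real.exp (-t ^ 2)) t := by
  have h := intervalIntegral.integral_hasDerivAt_right
    (cont_exp_neg_sq.intervalIntegrable 0 t)
    (cont_exp_neg_sq.stronglyMeasurableAtFilter _ _)
    cont_exp_neg_sq.continuousAt
  exact h.const_mul (2 / Real.sqrt π)

lemma erf_nonneg {t : ℝ} (ht : 0 ≤ t) : 0 ≤ erf t := by
  unfold erf
  apply mul_nonneg (by positivity)
  exact intervalIntegral.integral_nonneg ht (fun u _ => (Real.exp_pos _).le)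

lemma erf_nonpos {t : ℝ} (ht : t ≤ 0) : erf t ≤ 0 := by
  unfold erf
  apply mul_nonpos_of_nonneg_of_nonpos (by positivity)
  rw [intervalIntegral.integral_symm]
  simp only [neg_nonpos]
  exact intervalIntegral.integral_nonneg ht (fun u _ => (Real.exp_pos _).le)

lemma phi_pos {σ : ℝ} (hσ : 0 < σ) (t : ℝ) : 0 < phi σ t := by
  unfold phi
  have h2 : 0 < Real.sqrt (2 / π) * σ * Real.exp (-t ^ 2 / (2 * σ ^ 2)) := by
    have : (0:ℝ) < Real.sqrt (2 / π) := Real.sqrt_pos.2 (by positivity)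
    positivity
  have h1 : 0 ≤ t * erf (t / (Real.sqrt 2 * σ)) := by
    rcases le_or_gt 0 t with h | h
    · exact mul_nonneg h (erf_nonneg (by positivity))
    · exact mul_nonneg_of_nonpos_of_nonpos h.le
        (erf_nonpos (div_nonpos_of_nonpos_of_nonneg h.le (by positivity)))
  linarith

lemma sqrt_key {σ : ℝ} (hσ : 0 < σ) :
    Real.sqrt (2 / (π * σ ^ 2)) = 2 / Real.sqrt π * (1 / (Real.sqrt 2 * σ)) := by
  have h2 : Real.sqrt 2 * Real.sqrt 2 = 2 := Real.mul_self_sqrt (by norm_num)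
  have hπ : (0:ℝ) < Real.sqrt π := Real.sqrt_pos.2 pi_pos
  have h2' : (0:ℝ) < Real.sqrt 2 := Real.sqrt_pos.2 (by norm_num)
  rw [show (2:ℝ) / (π * σ ^ 2) = 2 / π / σ ^ 2 by ring,
    Real.sqrt_div' _ (by positivity), Real.sqrt_sq hσ.le,
    Real.sqrt_div (by norm_num : (0:ℝ) ≤ 2) π]
  field_simp
  nlinarith [h2, hπ, h2', hσ, mul_pos hπ hσ]

lemma hasDerivAt_E {σ : ℝ} (hσ : 0 < σ) (t : ℝ) :
    HasDerivAt (fun t => erf (t / (Real.sqrt 2 * σ)))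
      (Real.sqrt (2 / (π * σ ^ 2)) * Real.exp (-t ^ 2 / (2 * σ ^ 2))) t := by
  have h2 : Real.sqrt 2 * Real.sqrt 2 = 2 := Real.mul_self_sqrt (by norm_num)
  have h := (hasDerivAt_erf (t / (Real.sqrt 2 * σ))).comp t
    ((hasDerivAt_id t).div_const (Real.sqrt 2 * σ))
  have harg : -(t / (Real.sqrt 2 * σ)) ^ 2 = -t ^ 2 / (2 * σ ^ 2) := by
    rw [div_pow, mul_pow]
    rw [show Real.sqrt 2 ^ 2 = 2 by rw [sq]; exact h2]
    ring
  rw [harg] at h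
  refine h.congr_deriv ?_
  rw [sqrt_key hσ]
  ring

lemma sqrt_key2 {σ : ℝ} (hσ : 0 < σ) :
    Real.sqrt (2 / (π * σ ^ 2)) = Real.sqrt (2 / π) / σ := by
  rw [show (2:ℝ) / (π * σ ^ 2) = 2 / π / σ ^ 2 by ring,
    Real.sqrt_div' _ (by positivity), Real.sqrt_sq hσ.le]

lemma hasDerivAt_exp_gauss {σ : ℝ} (hσ : 0 < σ) (t : ℝ) :
    HasDerivAt (fun t => Real.exp (-t ^ 2 / (2 * σ ^ 2)))
      (Real.exp (-t ^ 2 / (2 * σ ^ 2)) * (-t / σ ^ 2)) t := by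
  have hinner : HasDerivAt (fun t : ℝ => -t ^ 2 / (2 * σ ^ 2)) (-t / σ ^ 2) t := by
    have h := ((hasDerivAt_pow 2 t).neg).div_const (2 * σ ^ 2)
    refine h.congr_deriv ?_
    field_simp
    ring
  exact (Real.hasDerivAt_exp _).comp t hinner

lemma hasDerivAt_phi {σ : ℝ} (hσ : 0 < σ) (t : ℝ) :
    HasDerivAt (phi σ) (erf (t / (Real.sqrt 2 * σ))) t := by
  have hE := hasDerivAt_E hσ t
  have h1 := (hasDerivAt_id t).mul hE
  have h2 := (hasDerivAt_exp_gauss hσ t).const_mul (Real.sqrt (2 / π) * σ)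
  have h := h1.add h2
  have heq : (phi σ) = fun t => t * erf (t / (Real.sqrt 2 * σ)) +
      Real.sqrt (2 / π) * σ * Real.exp (-t ^ 2 / (2 * σ ^ 2)) := by
    funext u; rfl
  rw [heq]
  refine h.congr_deriv ?_
  simp only [id_eq]
  rw [sqrt_key2 hσ]
  field_simp
  ring

lemma hasDerivAt_gp {σ : ℝ} (p : ℝ) (hσ : 0 < σ) (t : ℝ) :
    HasDerivAt (fun t => phi σ t ^ p)
      (p * phi σ t ^ (p - 1) * erf (t / (Real.sqrt 2 * σ))) t := by
  have h := (Real.hasDerivAt_rpow_const (p := p)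
    (Or.inl (phi_pos hσ t).ne')).comp t (hasDerivAt_phi hσ t)
  exact h

lemma hasDerivAt_g1 {σ : ℝ} (p : ℝ) (hσ : 0 < σ) (t : ℝ) :
    HasDerivAt (fun t => p * phi σ t ^ (p - 1) * erf (t / (Real.sqrt 2 * σ)))
      (p * ((p - 1) * phi σ t ^ (p - 2) * erf (t / (Real.sqrt 2 * σ)) ^ 2
        + phi σ t ^ (p - 1) * Real.sqrt (2 / (π * σ ^ 2))
            * Real.exp (-t ^ 2 / (2 * σ ^ 2)))) t := by
  have hφ : HasDerivAt (fun t => phi σ t ^ (p - 1))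
      ((p - 1) * phi σ t ^ (p - 1 - 1) * erf (t / (Real.sqrt 2 * σ))) t := by
    have h := (Real.hasDerivAt_rpow_const (p := p - 1)
      (Or.inl (phi_pos hσ t).ne')).comp t (hasDerivAt_phi hσ t)
    exact h
  have h := (hφ.const_mul p).mul (hasDerivAt_E hσ t)
  refine h.congr_deriv ?_
  rw [show p - 1 - 1 = p - 2 by ring]
  ring

noncomputable def ellCLM {m n : ℕ} (A : Matrix (Fin m) (Fin n) ℝ) (i : Fin m) :
    (Fin n → ℝ) →L[ℝ] ℝ := ∑ k, A i k • ContinuousLinearMap.proj k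

lemma ellCLM_apply {m n : ℕ} (A : Matrix (Fin m) (Fin n) ℝ) (i : Fin m) (v : Fin n → ℝ) :
    ellCLM A i v = ∑ k, A i k * v k := by
  simp [ellCLM]

lemma ellCLM_mulVec {m n : ℕ} (A : Matrix (Fin m) (Fin n) ℝ) (i : Fin m) (v : Fin n → ℝ) :
    ellCLM A i v = A.mulVec v i := by
  rw [ellCLM_apply]; simp [Matrix.mulVec, dotProduct]

lemma ellCLM_single {m n : ℕ} (A : Matrix (Fin m) (Fin n) ℝ) (i : Fin m) (j : Fin n) :
    ellCLM A i (Pi.single j 1) = A i j := by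
  rw [ellCLM_apply]
  simp [Pi.single_apply]

noncomputable def g1fun (p σ : ℝ) : ℝ → ℝ :=
  fun t => p * phi σ t ^ (p - 1) * erf (t / (Real.sqrt 2 * σ))

noncomputable def wfun (p σ : ℝ) : ℝ → ℝ := fun t =>
  (p - 1) * phi σ t ^ (p - 2) * erf (t / (Real.sqrt 2 * σ)) ^ 2
    + phi σ t ^ (p - 1) * Real.sqrt (2 / (π * σ ^ 2)) * Real.exp (-t ^ 2 / (2 * σ ^ 2))

lemma hasDerivAt_g1fun {σ : ℝ} (p : ℝ) (hσ : 0 < σ) (t : ℝ) :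
    HasDerivAt (g1fun p σ) (p * wfun p σ t) t := hasDerivAt_g1 p hσ t

noncomputable def LfCLM {m n : ℕ} (A : Matrix (Fin m) (Fin n) ℝ) (b : Fin m → ℝ)
    (lam p σ : ℝ) (y : Fin n → ℝ) : (Fin n → ℝ) →L[ℝ] ℝ :=
  (∑ i, (2 * (ellCLM A i y - b i)) • ellCLM A i)
    + lam • ∑ k, g1fun p σ (y k) • ContinuousLinearMap.proj k

lemma single_collapse {n : ℕ} (f : ℝ → ℝ) (y : Fin n → ℝ) (j : Fin n) :
    ∑ k, f (y k) * (Pi.single j 1 : Fin n → ℝ) k = f (y j) := by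
  rw [Finset.sum_eq_single j]
  · simp
  · intro k _ hk
    rw [Pi.single_eq_of_ne hk, mul_zero]
  · simp

set_option maxHeartbeats 1000000 in
/-- The functional `H_{p,σ}(x) = ‖Ax − b‖₂² + λ·∑ₖ φ_σ(xₖ)^p` is twice
differentiable on `ℝⁿ` with Hessian `∇²H_{p,σ}(x) = 2AᵀA + λ·p·Diag(w(x))`, where
`w_j(x) = (p−1)·φ_σ(x_j)^{p−2}·erf(x_j/(√2·σ))² + φ_σ(x_j)^{p−1}·√(2/(πσ²))·exp(−x_j²/(2σ²))`;
in particular the mixed second partial derivatives of the penalty vanish off the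
diagonal. -/
theorem H_hessian {m n : ℕ} (A : Matrix (Fin m) (Fin n) ℝ) (b : Fin m → ℝ)
    (lam p σ : ℝ) (hlam : 0 < lam) (hp : 1 ≤ p) (hσ : 0 < σ)
    (H : (Fin n → ℝ) → ℝ)
    (hH : ∀ x, H x = (∑ i, ((A.mulVec x - b) i) ^ 2) + lam * ∑ k, phi σ (x k) ^ p) :
    Differentiable ℝ H ∧
    Differentiable ℝ (fderiv ℝ H) ∧
    ∀ (x : Fin n → ℝ) (i j : Fin n),
      fderiv ℝ (fun y : Fin n → ℝ => fderiv ℝ H y (Pi.single j 1)) x (Pi.single i 1)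
        = (((2 : ℝ) • (Aᵀ * A)
            + (lam * p) • Matrix.diagonal (fun k : Fin n =>
                (p - 1) * phi σ (x k) ^ (p - 2) * erf (x k / (Real.sqrt 2 * σ)) ^ 2
                  + phi σ (x k) ^ (p - 1) * Real.sqrt (2 / (π * σ ^ 2))
                      * Real.exp (-(x k) ^ 2 / (2 * σ ^ 2))) :
            Matrix (Fin n) (Fin n) ℝ) i j) := by
  classical
  have hHrw : H = fun x => (∑ i, (ellCLM A i x - b i) ^ 2) + lam * ∑ k, phi σ (x k) ^ p := by
    funext x
    rw [hH x]
    congr 1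
    refine Finset.sum_congr rfl fun i _ => ?_
    rw [Pi.sub_apply, ellCLM_mulVec]
  have hF : ∀ y, HasFDerivAt H (LfCLM A b lam p σ y) y := by
    intro y
    rw [hHrw]
    have hq : ∀ i ∈ Finset.univ, HasFDerivAt (fun x : Fin n → ℝ => (ellCLM A i x - b i) ^ 2)
        ((2 * (ellCLM A i y - b i)) • ellCLM A i) y := by
      intro i _
      have hd : HasDerivAt (fun t : ℝ => (t - b i) ^ 2) (2 * (ellCLM A i y - b i))
          (ellCLM A i y) := by
        have h := ((hasDerivAt_id (ellCLM A i y)).sub_const (b i)).pow 2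
        refine h.congr_deriv ?_
        simp
      exact hd.comp_hasFDerivAt y (ellCLM A i).hasFDerivAt
    have hpen : ∀ k ∈ Finset.univ, HasFDerivAt (fun x : Fin n → ℝ => phi σ (x k) ^ p)
        (g1fun p σ (y k) • (ContinuousLinearMap.proj k : (Fin n → ℝ) →L[ℝ] ℝ)) y :=
      fun k _ => by
        have h := (hasDerivAt_gp p hσ (y k)).comp_hasFDerivAt y
          (ContinuousLinearMap.proj k : (Fin n → ℝ) →L[ℝ] ℝ).hasFDerivAt
        exact h
    exact (HasFDerivAt.fun_sum hq).add ((HasFDerivAt.fun_sum hpen).const_mul lam)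
  have hdiff : Differentiable ℝ H := fun y => (hF y).differentiableAt
  have hfd : fderiv ℝ H = LfCLM A b lam p σ := funext fun y => (hF y).fderiv
  have hg1diff : Differentiable ℝ (g1fun p σ) :=
    fun t => (hasDerivAt_g1fun p hσ t).differentiableAt
  have hLfdiff : Differentiable ℝ (LfCLM A b lam p σ) := by
    apply Differentiable.add
    · apply Differentiable.fun_sum
      intro i _
      exact (((ellCLM A i).differentiable.sub_const (b i)).const_mul 2).smul_const (ellCLM A i)
    · apply Differentiable.fun_const_smul
      apply Differentiable.fun_sum
      intro k _
      have hc : Differentiable ℝ fun x : Fin n → ℝ => g1fun p σ (x k) :=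
        hg1diff.comp (ContinuousLinearMap.proj (R := ℝ) (φ := fun _ : Fin n => ℝ) k).differentiable
      exact hc.smul_const _
  have hdiff2 : Differentiable ℝ (fderiv ℝ H) := by rw [hfd]; exact hLfdiff
  refine ⟨hdiff, hdiff2, ?_⟩
  intro x i j
  have hK : (fun y => fderiv ℝ H y (Pi.single j 1))
      = fun y => (∑ i', (2 * (ellCLM A i' y - b i')) * A i' j) + lam * g1fun p σ (y j) := by
    funext y
    rw [hfd]
    unfold LfCLM
    simp only [ContinuousLinearMap.add_apply, ContinuousLinearMap.sum_apply,
      ContinuousLinearMap.smul_apply, ContinuousLinearMap.proj_apply, smul_eq_mul]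
    congr 1
    · exact Finset.sum_congr rfl fun i' _ => by rw [ellCLM_single]
    · rw [single_collapse]
  have hM : HasFDerivAt
      (fun y : Fin n → ℝ =>
        (∑ i', (2 * (ellCLM A i' y - b i')) * A i' j) + lam * g1fun p σ (y j))
      ((∑ i', A i' j • ((2:ℝ) • ellCLM A i'))
        + lam • ((p * wfun p σ (x j))
            • (ContinuousLinearMap.proj j : (Fin n → ℝ) →L[ℝ] ℝ))) x := by
    apply HasFDerivAt.add
    · apply HasFDerivAt.fun_sum
      intro i' _
      exact (((ellCLM A i').hasFDerivAt.sub_const (b i')).const_mul 2).mul_const (A i' j)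
    · exact ((hasDerivAt_g1fun p hσ (x j)).comp_hasFDerivAt x
        (ContinuousLinearMap.proj j : (Fin n → ℝ) →L[ℝ] ℝ).hasFDerivAt).const_mul lam
  rw [hK, hM.fderiv]
  simp only [ContinuousLinearMap.add_apply, ContinuousLinearMap.sum_apply,
    ContinuousLinearMap.smul_apply, ContinuousLinearMap.proj_apply, smul_eq_mul,
    Matrix.add_apply, Matrix.smul_apply, Matrix.mul_apply, Matrix.transpose_apply,
    Matrix.diagonal_apply, ellCLM_single]
  rw [Pi.single_apply]
  unfold wfun
  by_cases h : i = j
  · subst h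
    rw [if_pos rfl, if_pos rfl, Finset.mul_sum]
    congr 1
    · exact Finset.sum_congr rfl fun k _ => by ring
    · ring
  · rw [if_neg (fun hji : j = i => h hji.symm), if_neg h, Finset.mul_sum]
    simp only [mul_zero, add_zero, mul_one]
    exact Finset.sum_congr rfl fun k _ => by ring
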